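/- There exists a constant c > 0 such that for infinitely many n there is a totally positive n-by-n real matrix A and a real number b whose multiplicity in A is at least c · n^{4/3}. -/

import Mathlib

/-- An m-by-n real matrix is totally positive if every minor of it
(of every size) is strictly positive. -/
def TotallyPositive {m n : ℕ} (A : Matrix (Fin m) (Fin n) ℝ) : Prop :=
  ∀ (k : ℕ) (f : Fin k → Fin m) (g : Fin k → Fin n),
    StrictMono f → StrictMono g → 0 < (A.submatrix f g).det

namespace Stmt5Aux

open Filter Real Finset

lemma perm_eq_one_of_strictMono {k : ℕ} {σ : Equiv.Perm (Fin k)} (h : StrictMono ⇑σ) : σ = 1 := by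
  have : ⇑σ = id := (h.range_inj strictMono_id).1 (by
    simp [σ.surjective.range_eq, Set.range_id])
  ext i; exact congrArg Fin.val (congrFun this i)

lemma rearr {k : ℕ} {x y : Fin k → ℝ} (hx : StrictMono x) (hy : StrictMono y)
    {σ : Equiv.Perm (Fin k)} (hσ : σ ≠ 1) :
    ∑ s, x (σ s) * y s < ∑ s, x s * y s := by
  have hmono : Monovary x y := fun i j h => (hx.le_iff_le.2 (hy.lt_iff_lt.1 h).le)
  refine (hmono.sum_comp_perm_mul_lt_sum_mul_iff).2 ?_
  intro hM
  refine hσ (perm_eq_one_of_strictMono ?_)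
  intro i j hij
  have h1 : x (σ i) ≤ x (σ j) := hM (hy hij)
  have h2 : σ i ≤ σ j := by
    by_contra hc
    exact absurd h1 (not_le.2 (hx (lt_of_not_ge hc)))
  exact lt_of_le_of_ne h2 (fun he => absurd (σ.injective he) hij.ne)

lemma det_exp_eventually_pos {k : ℕ} (x y u w : Fin k → ℝ)
    (hx : StrictMono x) (hy : StrictMono y) :
    ∀ᶠ τ in atTop, 0 < Matrix.det (Matrix.of fun s t : Fin k =>
      Real.exp (τ * (x s * y t + u s + w t))) := by
  set C : Equiv.Perm (Fin k) → ℝ := fun σ => ∑ s, (x (σ s) * y s + u (σ s) + w s) with hC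
  have hdet : ∀ τ : ℝ, Matrix.det (Matrix.of fun s t : Fin k =>
      Real.exp (τ * (x s * y t + u s + w t)))
      = ∑ σ : Equiv.Perm (Fin k), ((Equiv.Perm.sign σ : ℤ) : ℝ) * Real.exp (τ * C σ) := by
    intro τ
    rw [Matrix.det_apply]
    refine Finset.sum_congr rfl fun σ _ => ?_
    have : ∏ s : Fin k, (Matrix.of fun s t : Fin k =>
        Real.exp (τ * (x s * y t + u s + w t))) (σ s) s = Real.exp (τ * C σ) := by
      rw [hC, Finset.mul_sum, Real.exp_sum]
      rfl
    rw [this, Units.smul_def, zsmul_eq_mul]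
  have hClt : ∀ σ : Equiv.Perm (Fin k), σ ≠ 1 → C σ < C 1 := by
    intro σ hσ
    rw [hC]
    simp only [Finset.sum_add_distrib]
    have hu : ∑ s : Fin k, u (σ s) = ∑ s : Fin k, u s := Equiv.sum_comp σ u
    have := rearr hx hy hσ
    simp only [Equiv.Perm.one_apply, hu]
    linarith
  have hD : Tendsto (fun τ : ℝ => ∑ σ : Equiv.Perm (Fin k),
      ((Equiv.Perm.sign σ : ℤ) : ℝ) * Real.exp (τ * (C σ - C 1))) atTop
      (nhds (∑ σ : Equiv.Perm (Fin k), if σ = 1 then (1:ℝ) else 0)) := by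
    refine tendsto_finset_sum _ fun σ _ => ?_
    by_cases h1 : σ = 1
    · subst h1
      simp only [sub_self, mul_zero, Real.exp_zero, mul_one, if_pos rfl]
      simpa using tendsto_const_nhds
    · rw [if_neg h1]
      have hneg : C σ - C 1 < 0 := sub_neg.2 (hClt σ h1)
      have : Tendsto (fun τ : ℝ => Real.exp (τ * (C σ - C 1))) atTop (nhds 0) :=
        Real.tendsto_exp_atBot.comp (tendsto_id.atTop_mul_const_of_neg hneg)
      simpa using this.const_mul _
  rw [Finset.sum_ite_eq' Finset.univ (1 : Equiv.Perm (Fin k)) (fun _ => (1:ℝ))] at hD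
  simp only [Finset.mem_univ, if_pos] at hD
  have hev : ∀ᶠ τ in atTop, 0 < ∑ σ : Equiv.Perm (Fin k),
      ((Equiv.Perm.sign σ : ℤ) : ℝ) * Real.exp (τ * (C σ - C 1)) :=
    hD.eventually (eventually_gt_nhds one_pos)
  filter_upwards [hev] with τ hτ
  rw [hdet τ]
  have : ∑ σ : Equiv.Perm (Fin k), ((Equiv.Perm.sign σ : ℤ) : ℝ) * Real.exp (τ * C σ)
      = Real.exp (τ * C 1) * ∑ σ : Equiv.Perm (Fin k),
        ((Equiv.Perm.sign σ : ℤ) : ℝ) * Real.exp (τ * (C σ - C 1)) := by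
    rw [Finset.mul_sum]
    refine Finset.sum_congr rfl fun σ _ => ?_
    rw [mul_comm (rexp (τ * C 1)), mul_assoc, ← Real.exp_add]
    ring_nf
  rw [this]
  exact mul_pos (Real.exp_pos _) hτ

lemma tp_exists {n : ℕ} (X Y U W : Fin n → ℝ) (hX : StrictMono X) (hY : StrictMono Y) :
    ∃ τ : ℝ, TotallyPositive (Matrix.of fun i j : Fin n =>
      Real.exp (τ * (X i * Y j + U i + W j))) := by
  have key : ∀ᶠ τ in atTop, ∀ p : (Σ k : Fin (n+1), (Fin k.1 → Fin n) × (Fin k.1 → Fin n)),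
      StrictMono p.2.1 → StrictMono p.2.2 →
      0 < (((Matrix.of fun i j : Fin n => Real.exp (τ * (X i * Y j + U i + W j))).submatrix
        p.2.1 p.2.2)).det := by
    rw [Filter.eventually_all]
    rintro ⟨k, f, g⟩
    by_cases h1 : StrictMono f ∧ StrictMono g
    · have := det_exp_eventually_pos (X ∘ f) (Y ∘ g) (U ∘ f) (W ∘ g)
        (hX.comp h1.1) (hY.comp h1.2)
      filter_upwards [this] with τ hτ _ _
      convert hτ using 2
      rfl
    · filter_upwards with τ hf hg
      exact absurd ⟨hf, hg⟩ h1
  obtain ⟨τ, hτ⟩ := key.exists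
  refine ⟨τ, ?_⟩
  intro k f g hf hg
  have hk : k ≤ n := by
    simpa using Fintype.card_le_of_injective f hf.injective
  exact hτ ⟨⟨k, Nat.lt_succ_of_le hk⟩, f, g⟩ hf hg

/-! ### The incidence construction -/

def Aa (m : ℕ) (i : Fin (2*m^3)) : ℕ := i.val / (2*m^2) + 1

def Bb (m : ℕ) (i : Fin (2*m^3)) : ℕ := 2*m^2 - i.val % (2*m^2)

noncomputable def mu (m : ℕ) : ℝ := 1/(4*(m:ℝ)^3)

noncomputable def Xf (m : ℕ) (i : Fin (2*m^3)) : ℝ :=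
  (Aa m i : ℝ) / (1 + mu m * (Bb m i : ℝ))

noncomputable def Uf (m : ℕ) (i : Fin (2*m^3)) : ℝ :=
  -(Bb m i : ℝ) / (1 + mu m * (Bb m i : ℝ))

noncomputable def Wf (m : ℕ) (j : Fin (2*m^3)) : ℝ :=
  (Bb m j : ℝ) / (1 + mu m * (Bb m j : ℝ))

variable {m : ℕ}

lemma hK_pos (hm : 1 ≤ m) : 0 < 2*m^2 := by
  have := Nat.one_le_pow 2 m hm
  omega

lemma hn_pos (hm : 1 ≤ m) : 0 < 2*m^3 := by
  have := Nat.one_le_pow 3 m hm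
  omega

lemma Aa_le (hm : 1 ≤ m) (i : Fin (2*m^3)) : Aa m i ≤ m := by
  have hm2 : 1 ≤ m^2 := Nat.one_le_pow _ _ hm
  have h2 : 0 < 2*m^2 := by omega
  have : i.val / (2*m^2) < m := by
    rw [Nat.div_lt_iff_lt_mul h2]
    calc i.val < 2*m^3 := i.isLt
    _ ≤ m * (2*m^2) := by ring_nf; omega
  unfold Aa; omega

lemma Aa_ge (i : Fin (2*m^3)) : 1 ≤ Aa m i := Nat.le_add_left 1 _

lemma Bb_ge (hm : 1 ≤ m) (i : Fin (2*m^3)) : 1 ≤ Bb m i := by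
  have := Nat.mod_lt i.val (y := 2*m^2) (hK_pos hm)
  unfold Bb; omega

lemma Bb_le (i : Fin (2*m^3)) : Bb m i ≤ 2*m^2 := by unfold Bb; omega

lemma mu_pos (hm : 1 ≤ m) : 0 < mu m := by
  have : (1:ℝ) ≤ (m:ℝ) := by exact_mod_cast hm
  unfold mu; positivity

lemma mu_small (hm : 1 ≤ m) (a b : ℝ) (ha : 1 ≤ a) (ha' : a ≤ m) (hb : 0 ≤ b)
    (hb' : b ≤ 2*(m:ℝ)^2) : (a - 1) * (mu m * b) ≤ 1/2 := by
  have hmR : (1:ℝ) ≤ (m:ℝ) := by exact_mod_cast hm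
  have hm3 : (0:ℝ) < (m:ℝ)^3 := by positivity
  unfold mu
  have h1 : (1/(4*(m:ℝ)^3)) * b ≤ (1/(4*(m:ℝ)^3)) * (2*(m:ℝ)^2) :=
    mul_le_mul_of_nonneg_left hb' (by positivity)
  have h2 : (1/(4*(m:ℝ)^3)) * (2*(m:ℝ)^2) = 1/(2*(m:ℝ)) := by
    field_simp; ring
  have h3 : (a-1) * ((1/(4*(m:ℝ)^3)) * b) ≤ (a-1) * (1/(2*(m:ℝ))) :=
    mul_le_mul_of_nonneg_left (h2 ▸ h1) (by linarith)
  have h4 : (a-1) * (1/(2*(m:ℝ))) ≤ (m:ℝ) * (1/(2*(m:ℝ))) :=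
    mul_le_mul_of_nonneg_right (by linarith) (by positivity)
  have h5 : (m:ℝ) * (1/(2*(m:ℝ))) = 1/2 := by
    field_simp
  linarith

lemma Xf_strictMono (hm : 1 ≤ m) : StrictMono (Xf m) := by
  have hμ := mu_pos hm
  have hmR : (1:ℝ) ≤ (m:ℝ) := by exact_mod_cast hm
  intro i i' h
  have hK := hK_pos hm
  have hA1 : (1:ℝ) ≤ (Aa m i : ℝ) := by exact_mod_cast Aa_ge i
  have hA1' : (1:ℝ) ≤ (Aa m i' : ℝ) := by exact_mod_cast Aa_ge i'
  have hB1 : (1:ℝ) ≤ (Bb m i : ℝ) := by exact_mod_cast Bb_ge hm i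
  have hB1' : (1:ℝ) ≤ (Bb m i' : ℝ) := by exact_mod_cast Bb_ge hm i'
  by_cases hd : i.val / (2*m^2) = i'.val / (2*m^2)
  · -- same row block: Aa equal, Bb strictly decreasing
    have hAeq : Aa m i = Aa m i' := by unfold Aa; omega
    have hmod : i.val % (2*m^2) < i'.val % (2*m^2) := by
      have e1 := Nat.div_add_mod i.val (2*m^2)
      have e2 := Nat.div_add_mod i'.val (2*m^2)
      rw [← hd] at e2
      have hiv : i.val < i'.val := h
      omega
    have hBlt : Bb m i' < Bb m i := by
      have := Nat.mod_lt i'.val (y := 2*m^2) hK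
      unfold Bb at *
      omega
    have hBltR : (Bb m i' : ℝ) < (Bb m i : ℝ) := by exact_mod_cast hBlt
    unfold Xf
    rw [← hAeq]
    exact div_lt_div_of_pos_left (by linarith) (by nlinarith) (by nlinarith)
  · -- Aa strictly increases
    have hdle : i.val / (2*m^2) ≤ i'.val / (2*m^2) := Nat.div_le_div_right h.le
    have hAlt : Aa m i < Aa m i' := by unfold Aa at *; omega
    have hAltR : (Aa m i : ℝ) ≤ (Aa m i' : ℝ) - 1 := by
      have : Aa m i + 1 ≤ Aa m i' := hAlt
      have := (Nat.cast_le (α := ℝ)).2 this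
      push_cast at this
      linarith
    have hupper : Xf m i < (Aa m i : ℝ) := by
      unfold Xf
      rw [div_lt_iff₀ (by nlinarith)]
      nlinarith [mul_pos (mul_pos (show (0:ℝ) < (Aa m i :ℝ) by linarith) hμ)
        (show (0:ℝ) < (Bb m i : ℝ) by linarith)]
    have hlower : (Aa m i' : ℝ) - 1 < Xf m i' := by
      have hsmall : ((Aa m i' : ℝ) - 1) * (mu m * (Bb m i' : ℝ)) ≤ 1/2 := by
        refine mu_small hm _ _ hA1' ?_ (by linarith) ?_
        · exact_mod_cast Aa_le hm i'
        · have := Bb_le (m := m) i'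
          have := (Nat.cast_le (α := ℝ)).2 this
          push_cast at this
          linarith
      unfold Xf
      rw [lt_div_iff₀ (by nlinarith)]
      nlinarith
    linarith

lemma G_zero (hm : 1 ≤ m) (i j : Fin (2*m^3)) (h : Bb m i = Aa m i * Aa m j + Bb m j) :
    Xf m i * Xf m j + Uf m i + Wf m j = 0 := by
  have hμ := mu_pos hm
  have hb : (0:ℝ) ≤ (Bb m i : ℝ) := by positivity
  have hd : (0:ℝ) ≤ (Bb m j : ℝ) := by positivity
  have h1 : (0:ℝ) < 1 + mu m * (Bb m i : ℝ) := by nlinarith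
  have h2 : (0:ℝ) < 1 + mu m * (Bb m j : ℝ) := by nlinarith
  have hR : (Bb m i : ℝ) = (Aa m i : ℝ) * (Aa m j : ℝ) + (Bb m j : ℝ) := by
    exact_mod_cast h
  unfold Xf Uf Wf
  rw [hR]
  field_simp
  ring

/-- encoding of a pair (a,b) with 1 ≤ a ≤ m, 1 ≤ b ≤ 2m² as an index -/
def enc (m : ℕ) (hm : 1 ≤ m) (a b : ℕ) : Fin (2*m^3) :=
  ⟨((a-1)*(2*m^2) + (2*m^2 - b)) % (2*m^3), Nat.mod_lt _ (hn_pos hm)⟩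

lemma enc_spec (hm : 1 ≤ m) {a b : ℕ} (ha : 1 ≤ a) (ha' : a ≤ m) (hb : 1 ≤ b)
    (hb' : b ≤ 2*m^2) : Aa m (enc m hm a b) = a ∧ Bb m (enc m hm a b) = b := by
  have hm2 : 1 ≤ m^2 := Nat.one_le_pow _ _ hm
  have h2 : 0 < 2*m^2 := by omega
  have hlt : 2*m^2 - b < 2*m^2 := by omega
  have hlt' : (a-1)*(2*m^2) + (2*m^2 - b) < 2*m^3 := by
    have h3 : (a-1)*(2*m^2) ≤ (m-1)*(2*m^2) := Nat.mul_le_mul_right _ (by omega)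
    have hmm : 2*m^3 = m*(2*m^2) := by ring
    have h4 : (m-1)*(2*m^2) + 2*m^2 = m * (2*m^2) := by
      have hm1 : m - 1 + 1 = m := by omega
      calc (m-1)*(2*m^2) + 2*m^2 = (m-1+1)*(2*m^2) := by ring
      _ = m * (2*m^2) := by rw [hm1]
    omega
  have hval : (enc m hm a b).val = (a-1)*(2*m^2) + (2*m^2 - b) := by
    unfold enc
    simp [Nat.mod_eq_of_lt hlt']
  constructor
  · unfold Aa
    rw [hval, Nat.add_comm ((a-1)*(2*m^2)) (2*m^2 - b), Nat.add_mul_div_right _ _ h2,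
      Nat.div_eq_of_lt hlt]
    omega
  · unfold Bb
    rw [hval, Nat.add_comm ((a-1)*(2*m^2)) (2*m^2 - b), Nat.add_mul_mod_self_right,
      Nat.mod_eq_of_lt hlt]
    omega

lemma construction (m : ℕ) (hm : 1 ≤ m) :
    ∃ A : Matrix (Fin (2*m^3)) (Fin (2*m^3)) ℝ, TotallyPositive A ∧
      (m^4 : ℕ) ≤ (Finset.univ.filter
        fun q : Fin (2*m^3) × Fin (2*m^3) => A q.1 q.2 = 1).card := by
  obtain ⟨τ, hTP⟩ := tp_exists (Xf m) (Xf m) (Uf m) (Wf m) (Xf_strictMono hm) (Xf_strictMono hm)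
  refine ⟨_, hTP, ?_⟩
  -- counting
  have hm2 : 1 ≤ m^2 := Nat.one_le_pow _ _ hm
  set T := (Finset.univ.filter
    fun q : Fin (2*m^3) × Fin (2*m^3) =>
      (Matrix.of fun i j : Fin (2*m^3) =>
        Real.exp (τ * (Xf m i * Xf m j + Uf m i + Wf m j))) q.1 q.2 = 1) with hT
  set S : Finset (ℕ × ℕ × ℕ) := Finset.Icc 1 m ×ˢ (Finset.Icc 1 m ×ˢ Finset.Icc 1 (m^2))
    with hS
  have hScard : S.card = m^4 := by
    rw [hS, Finset.card_product, Finset.card_product, Nat.card_Icc, Nat.card_Icc]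
    simp only [Nat.add_sub_cancel]
    ring
  have hrange : ∀ p ∈ S, 1 ≤ p.1 ∧ p.1 ≤ m ∧ 1 ≤ p.2.1 ∧ p.2.1 ≤ m ∧ 1 ≤ p.2.2 ∧
      p.2.2 ≤ m^2 := by
    intro p hp
    rw [hS] at hp
    simp only [Finset.mem_product, Finset.mem_Icc] at hp
    exact ⟨hp.1.1, hp.1.2, hp.2.1.1, hp.2.1.2, hp.2.2.1, hp.2.2.2⟩
  have hbd : ∀ p ∈ S, 1 ≤ p.1 * p.2.1 + p.2.2 ∧ p.1 * p.2.1 + p.2.2 ≤ 2*m^2 := by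
    intro p hp
    obtain ⟨h1, h2, h3, h4, h5, h6⟩ := hrange p hp
    constructor
    · omega
    · have : p.1 * p.2.1 ≤ m * m := Nat.mul_le_mul h2 h4
      have hmm : m * m = m^2 := by ring
      omega
  classical
  set φ : ℕ × ℕ × ℕ → Fin (2*m^3) × Fin (2*m^3) :=
    fun p => (enc m hm p.1 (p.1 * p.2.1 + p.2.2), enc m hm p.2.1 p.2.2) with hφ
  have hmaps : ∀ p ∈ S, φ p ∈ T := by
    intro p hp
    obtain ⟨h1, h2, h3, h4, h5, h6⟩ := hrange p hp
    obtain ⟨hb1, hb2⟩ := hbd p hp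
    obtain ⟨hA1, hB1⟩ := enc_spec hm h1 h2 hb1 hb2
    obtain ⟨hA2, hB2⟩ := enc_spec hm h3 h4 h5 (by omega)
    rw [hT]
    simp only [Finset.mem_filter, Finset.mem_univ, true_and]
    have hzero : Xf m (φ p).1 * Xf m (φ p).2 + Uf m (φ p).1 + Wf m (φ p).2 = 0 := by
      apply G_zero hm
      rw [hφ]
      simp only
      rw [hA1, hB1, hA2, hB2]
    show Real.exp (τ * (Xf m (φ p).1 * Xf m (φ p).2 + Uf m (φ p).1 + Wf m (φ p).2)) = 1
    rw [hzero, mul_zero, Real.exp_zero]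
  have hinj : Set.InjOn φ S := by
    intro p hp p' hp' he
    obtain ⟨h1, h2, h3, h4, h5, h6⟩ := hrange p hp
    obtain ⟨h1', h2', h3', h4', h5', h6'⟩ := hrange p' hp'
    obtain ⟨hb1, hb2⟩ := hbd p hp
    obtain ⟨hb1', hb2'⟩ := hbd p' hp'
    obtain ⟨hA1, hB1⟩ := enc_spec hm h1 h2 hb1 hb2
    obtain ⟨hA2, hB2⟩ := enc_spec hm h3 h4 h5 (by omega)
    obtain ⟨hA1', hB1'⟩ := enc_spec hm h1' h2' hb1' hb2'
    obtain ⟨hA2', hB2'⟩ := enc_spec hm h3' h4' h5' (by omega)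
    rw [hφ] at he
    simp only [Prod.mk.injEq] at he
    have e1 : p.1 = p'.1 := by rw [← hA1, ← hA1', he.1]
    have e2 : p.2.1 = p'.2.1 := by rw [← hA2, ← hA2', he.2]
    have e3 : p.2.2 = p'.2.2 := by
      have := hB2 ▸ hB2' ▸ congrArg (Bb m) he.2
      omega
    exact Prod.ext e1 (Prod.ext e2 e3)
  calc (m^4 : ℕ) = S.card := hScard.symm
  _ ≤ T.card := Finset.card_le_card_of_injOn φ hmaps hinj

lemma numeric (m : ℕ) (hm : 1 ≤ m) :
    (1/4 : ℝ) * ((2*m^3 : ℕ) : ℝ) ^ ((4:ℝ)/3) ≤ ((m^4 : ℕ) : ℝ) := by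
  have hx : (0:ℝ) ≤ (m:ℝ) := by positivity
  have hcast : ((2*m^3 : ℕ) : ℝ) = 2 * (m:ℝ)^3 := by push_cast; ring
  rw [hcast, Real.mul_rpow (by norm_num) (by positivity)]
  have h1 : ((m:ℝ)^(3:ℕ)) ^ ((4:ℝ)/3) = (m:ℝ)^(4:ℕ) := by
    rw [← Real.rpow_natCast (m:ℝ) 3, ← Real.rpow_mul hx, ← Real.rpow_natCast (m:ℝ) 4]
    norm_num
  have h2 : (2:ℝ) ^ ((4:ℝ)/3) ≤ 4 := by
    calc (2:ℝ)^((4:ℝ)/3) ≤ 2^(2:ℝ) :=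
      Real.rpow_le_rpow_of_exponent_le (by norm_num) (by norm_num)
    _ = 4 := by
      rw [show (2:ℝ) = ((2:ℕ):ℝ) by norm_num, Real.rpow_natCast]
      norm_num
  rw [h1]
  have h3 : ((m^4 : ℕ) : ℝ) = (m:ℝ)^(4:ℕ) := by push_cast; ring
  rw [h3]
  nlinarith [pow_nonneg hx 4, mul_le_mul_of_nonneg_right h2 (pow_nonneg hx 4)]

end Stmt5Aux

/-- for infinitely many n there is an n-by-n totally positive
matrix with some value of multiplicity at least c·n^{4/3}. -/
theorem stmt_5 : ∃ c : ℝ, 0 < c ∧ ∀ N : ℕ, ∃ n : ℕ, N ≤ n ∧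
    ∃ (A : Matrix (Fin n) (Fin n) ℝ) (b : ℝ), TotallyPositive A ∧
      c * (n : ℝ) ^ ((4 : ℝ) / 3)
        ≤ ((Finset.univ.filter fun q : Fin n × Fin n => A q.1 q.2 = b).card : ℝ) := by
  refine ⟨1/4, by norm_num, fun N => ?_⟩
  set m := N + 1 with hmdef
  have hm : 1 ≤ m := by omega
  refine ⟨2*m^3, ?_, ?_⟩
  · have : m ≤ m^3 := Nat.le_self_pow (by norm_num) m
    omega
  · obtain ⟨A, hTP, hcard⟩ := Stmt5Aux.construction m hm
    refine ⟨A, 1, hTP, ?_⟩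
    have h1 := Stmt5Aux.numeric m hm
    have h2 : ((m^4 : ℕ) : ℝ) ≤ ((Finset.univ.filter
        fun q : Fin (2*m^3) × Fin (2*m^3) => A q.1 q.2 = 1).card : ℝ) := by
      exact_mod_cast hcard
    linarith
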